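/- Let T be a firm non-expansive mapping of a weak metric space (X,δ) into itself. Then the asymptotic step size equals the escape rate: for every x ∈ X, lim_{n→∞} δ(Tⁿx, T^{n+1}x) = lim_{n→∞} δ(x, Tⁿx)/n. -/
import Mathlib


open Filter Topology

set_option maxHeartbeats 1000000

def IsWeakMetric {X : Type*} (δ : X → X → ℝ) : Prop :=
  (∀ x, δ x x = 0) ∧ (∀ x y, 0 ≤ δ x y) ∧ (∀ x y z, δ x z ≤ δ x y + δ y z)

def IsNonexpansive {X : Type*} (δ : X → X → ℝ) (T : X → X) : Prop :=
  ∀ x y, δ (T x) (T y) ≤ δ x y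

def IsFirm {X : Type*} (δ : X → X → ℝ) (T : X → X) : Prop :=
  ∃ q r s t : X → X → ℝ,
    (∀ x y, 0 ≤ q x y) ∧ (∀ x y, 0 ≤ r x y) ∧ (∀ x y, 0 ≤ s x y) ∧ (∀ x y, 0 ≤ t x y) ∧
    (∃ α > 0, ∀ x y, α ≤ t x y) ∧
    (∀ x y, q x y + r x y + s x y + 2 * t x y ≤ 1) ∧
    (∀ x y, δ (T x) (T y) ≤ q x y * δ x y + r x y * δ x (T x) + s x y * δ y (T y)
      + t x y * (δ x (T y) + δ (T x) y))

theorem stmt11 {X : Type*} (δ : X → X → ℝ) (T : X → X)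
    (hδ : IsWeakMetric δ) (hT : IsNonexpansive δ T) (hF : IsFirm δ T)
    (x : X) (ρ σ1 : ℝ)
    (hρ : Tendsto (fun n : ℕ => δ x (T^[n] x) / n) atTop (nhds ρ))
    (hσ1 : Tendsto (fun n : ℕ => δ (T^[n] x) (T^[n + 1] x)) atTop (nhds σ1)) :
    σ1 = ρ := by
  obtain ⟨hzero, hnonneg, htri⟩ := hδ
  obtain ⟨q, r, s, t, hq0, hr0, hs0, ht0, ⟨α, hα, hαt⟩, hsum, hfirm⟩ := hF
  set a : ℕ → ℝ := fun n => δ (T^[n] x) (T^[n + 1] x) with ha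
  set D : ℕ → ℕ → ℝ := fun k m => δ (T^[k] x) (T^[k + m] x) with hD
  have hσ1' : Tendsto a atTop (𝓝 σ1) := hσ1
  -- D is antitone in k
  have hstep : ∀ k m, D (k + 1) m ≤ D k m := by
    intro k m
    have h := hT (T^[k] x) (T^[k + m] x)
    simp only [hD]
    have e1 : T^[k + 1] x = T (T^[k] x) := Function.iterate_succ_apply' T k x
    have e2 : T^[k + 1 + m] x = T (T^[k + m] x) := by
      rw [show k + 1 + m = (k + m) + 1 by ring, Function.iterate_succ_apply']
    rw [e1, e2]; exact h
  have hanti : ∀ m, Antitone fun k => D k m := fun m =>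
    antitone_nat_of_succ_le fun k => hstep k m
  have hbdd : ∀ m, BddBelow (Set.range fun k => D k m) := fun m =>
    ⟨0, by rintro _ ⟨k, rfl⟩; exact hnonneg _ _⟩
  set L : ℕ → ℝ := fun m => ⨅ k, D k m with hLdef
  have hLtend : ∀ m, Tendsto (fun k => D k m) atTop (𝓝 (L m)) := fun m =>
    tendsto_atTop_ciInf (hanti m) (hbdd m)
  have hLD : ∀ k m, L m ≤ D k m := fun k m => ciInf_le (hbdd m) k
  -- a is antitone
  have haanti : Antitone a := antitone_nat_of_succ_le fun k => hstep k 1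
  -- triangle chain bound
  have hchain : ∀ k m, D k m ≤ ∑ j ∈ Finset.range m, a (k + j) := by
    intro k m
    induction m with
    | zero => simp [hD, hzero]
    | succ m ih =>
      rw [Finset.sum_range_succ]
      have h := htri (T^[k] x) (T^[k + m] x) (T^[k + (m + 1)] x)
      have h2 : D k (m + 1) ≤ D k m + a (k + m) := by
        simp only [hD, ha]
        calc δ (T^[k] x) (T^[k + (m + 1)] x)
            ≤ δ (T^[k] x) (T^[k + m] x) + δ (T^[k + m] x) (T^[k + (m + 1)] x) := h
          _ = δ (T^[k] x) (T^[k + m] x) + δ (T^[k + m] x) (T^[k + m + 1] x) := by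
              rw [show k + (m + 1) = k + m + 1 by ring]
      linarith
  have hσ0 : 0 ≤ σ1 :=
    le_of_tendsto_of_tendsto' tendsto_const_nhds hσ1' fun n => hnonneg _ _
  have hL1 : L 1 = σ1 := by
    refine tendsto_nhds_unique (hLtend 1) ?_
    have e : (fun k => D k 1) = a := by funext k; simp [hD, ha]
    rw [e]; exact hσ1'
  -- upper bound: L m ≤ m * σ1
  have hLle : ∀ m : ℕ, L m ≤ (m : ℝ) * σ1 := by
    intro m
    have hsumt : Tendsto (fun k => ∑ j ∈ Finset.range m, a (k + j)) atTop
        (𝓝 ((m : ℝ) * σ1)) := by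
      have h1 : ∀ j : ℕ, Tendsto (fun k => a (k + j)) atTop (𝓝 σ1) := fun j =>
        hσ1'.comp (tendsto_add_atTop_nat j)
      have h2 := tendsto_finset_sum (Finset.range m) fun j _ => h1 j
      simpa [Finset.sum_const, nsmul_eq_mul] using h2
    exact le_of_tendsto_of_tendsto' (hLtend m) hsumt fun k => hchain k m
  -- lower bound by induction: m * σ1 ≤ L m
  have hLge : ∀ m : ℕ, 1 ≤ m → (m : ℝ) * σ1 ≤ L m := by
    intro m hm
    induction m, hm using Nat.le_induction with
    | base => simp [hL1]
    | succ m hm ih =>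
      obtain ⟨j, rfl⟩ := Nat.exists_eq_add_of_le hm
      -- m = 1 + j ; prove (j+2) * σ1 ≤ L (j+2)
      have hgoal : ((j : ℝ) + 2) * σ1 ≤ L (j + 2) := by
        refine le_of_forall_pos_le_add fun ε hε => ?_
        set ε₀ : ℝ := ε * α with hε₀def
        have hε₀ : 0 < ε₀ := mul_pos hε hα
        have h1 : ∀ᶠ k in atTop, a k ≤ σ1 + ε₀ :=
          hσ1'.eventually_le_const (by linarith)
        have h2 : ∀ᶠ k in atTop, D k (j + 1) ≤ L (j + 1) + ε₀ :=
          (hLtend (j + 1)).eventually_le_const (by linarith)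
        have h3 : ∀ᶠ k in atTop, D k j ≤ L j + ε₀ :=
          (hLtend j).eventually_le_const (by linarith)
        obtain ⟨K, hK⟩ := eventually_atTop.mp ((h1.and h2).and h3)
        have key : ∀ k ≥ K, ((j : ℝ) + 2) * σ1 - ε ≤ D k (j + 2) := by
          intro k hk
          obtain ⟨⟨ha1, h2k⟩, -⟩ := hK k hk
          obtain ⟨⟨-, -⟩, h3k'⟩ := hK (k + 1) (le_trans hk (Nat.le_succ k))
          set Q := q (T^[k] x) (T^[k + (j + 1)] x) with hQ
          set R := r (T^[k] x) (T^[k + (j + 1)] x) with hR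
          set S := s (T^[k] x) (T^[k + (j + 1)] x) with hS
          set Tt := t (T^[k] x) (T^[k + (j + 1)] x) with hTt
          have hA : D (k + 1) (j + 1) ≤ Q * D k (j + 1) + R * a k + S * a (k + (j + 1))
              + Tt * (D k (j + 2) + D (k + 1) j) := by
            have hfk := hfirm (T^[k] x) (T^[k + (j + 1)] x)
            have E1 : T (T^[k] x) = T^[k + 1] x := (Function.iterate_succ_apply' T k x).symm
            have E2 : T (T^[k + (j + 1)] x) = T^[k + (j + 1) + 1] x :=
              (Function.iterate_succ_apply' T (k + (j + 1)) x).symm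
            rw [E1, E2] at hfk
            rw [← hQ, ← hR, ← hS, ← hTt] at hfk
            simp only [hD, ha]
            rw [show k + 1 + (j + 1) = k + (j + 1) + 1 by omega,
                show k + (j + 2) = k + (j + 1) + 1 by omega,
                show k + 1 + j = k + (j + 1) by omega]
            exact hfk
          have hQs : Q + R + S + 2 * Tt ≤ 1 := hsum _ _
          have hQn : 0 ≤ Q := hq0 _ _
          have hRn : 0 ≤ R := hr0 _ _
          have hSn : 0 ≤ S := hs0 _ _
          have hTα : α ≤ Tt := hαt _ _
          have hTn : 0 < Tt := lt_of_lt_of_le hα hTα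
          have hb1 : L (j + 1) ≤ D (k + 1) (j + 1) := hLD (k + 1) (j + 1)
          have haj : a (k + (j + 1)) ≤ σ1 + ε₀ :=
            le_trans (haanti (Nat.le_add_right k (j + 1))) ha1
          have hLj : L j ≤ (j : ℝ) * σ1 := hLle j
          have ihc : ((j : ℝ) + 1) * σ1 ≤ L (j + 1) := by
            rw [show j + 1 = 1 + j by omega]
            push_cast at ih
            linarith
          have hLpos : 0 ≤ L (j + 1) :=
            le_trans (mul_nonneg (by positivity) hσ0) ihc
          have p1 : Q * D k (j + 1) ≤ Q * (L (j + 1) + ε₀) :=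
            mul_le_mul_of_nonneg_left h2k hQn
          have p2 : R * a k ≤ R * (σ1 + ε₀) := mul_le_mul_of_nonneg_left ha1 hRn
          have p3 : S * a (k + (j + 1)) ≤ S * (σ1 + ε₀) :=
            mul_le_mul_of_nonneg_left haj hSn
          have p4 : Tt * D (k + 1) j ≤ Tt * ((j : ℝ) * σ1 + ε₀) :=
            mul_le_mul_of_nonneg_left (by linarith) hTn.le
          have p5 : (R + S + 2 * Tt) * L (j + 1) ≤ (1 - Q) * L (j + 1) :=
            mul_le_mul_of_nonneg_right (by linarith) hLpos
          have p6 : (R + S + 2 * Tt) * (((j : ℝ) + 1) * σ1) ≤ (R + S + 2 * Tt) * L (j + 1) :=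
            mul_le_mul_of_nonneg_left ihc (by linarith)
          have p7 : 0 ≤ (R + S) * ((j : ℝ) * σ1) :=
            mul_nonneg (by linarith) (mul_nonneg (by positivity) hσ0)
          have p8 : (Q + R + S + Tt) * ε₀ ≤ 1 * ε₀ :=
            mul_le_mul_of_nonneg_right (by linarith) hε₀.le
          have goal1 : Tt * (((j : ℝ) + 2) * σ1) - ε₀ ≤ Tt * D k (j + 2) := by
            nlinarith [hA, hb1, p1, p2, p3, p4, p5, p6, p7, p8]
          -- divide by Tt ≥ α
          have h6 : α * (((j : ℝ) + 2) * σ1 - D k (j + 2)) ≤ ε₀ := by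
            rcases le_or_gt (((j : ℝ) + 2) * σ1 - D k (j + 2)) 0 with h | h
            · have := mul_nonpos_of_nonneg_of_nonpos hα.le h
              linarith
            · have h7 : Tt * (((j : ℝ) + 2) * σ1 - D k (j + 2)) ≤ ε₀ := by nlinarith
              have h8 : α * (((j : ℝ) + 2) * σ1 - D k (j + 2))
                  ≤ Tt * (((j : ℝ) + 2) * σ1 - D k (j + 2)) :=
                mul_le_mul_of_nonneg_right hTα h.le
              linarith
          have h9 : ((j : ℝ) + 2) * σ1 - D k (j + 2) ≤ ε := by
            have := h6
            rw [hε₀def] at this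
            nlinarith
          linarith
        have := ge_of_tendsto (hLtend (j + 2)) (eventually_atTop.mpr ⟨K, key⟩)
        linarith
      have hcast : ((1 + j + 1 : ℕ) : ℝ) = (j : ℝ) + 2 := by push_cast; ring
      have hidx : 1 + j + 1 = j + 2 := by omega
      rw [hcast, hidx]
      exact hgoal
  -- σ1 ≤ ρ
  have hD0 : ∀ n, D 0 n = δ x (T^[n] x) := fun n => by simp [hD]
  have hge : σ1 ≤ ρ := by
    refine ge_of_tendsto hρ ?_
    filter_upwards [eventually_ge_atTop 1] with n hn
    have hnp : (0 : ℝ) < (n : ℝ) := by exact_mod_cast hn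
    have h1 : (n : ℝ) * σ1 ≤ δ x (T^[n] x) := by
      calc (n : ℝ) * σ1 ≤ L n := hLge n hn
        _ ≤ D 0 n := hLD 0 n
        _ = δ x (T^[n] x) := hD0 n
    rw [le_div_iff₀ hnp]
    linarith [h1]
  -- ρ ≤ σ1 via Cesàro
  have hle : ρ ≤ σ1 := by
    have hces := hσ1'.cesaro
    refine le_of_tendsto_of_tendsto' hρ hces fun n => ?_
    rcases Nat.eq_zero_or_pos n with rfl | hn
    · simp [hzero]
    · have h1 : δ x (T^[n] x) ≤ ∑ i ∈ Finset.range n, a i := by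
        have h := hchain 0 n
        simpa [hD] using h
      rw [div_eq_inv_mul]
      exact mul_le_mul_of_nonneg_left h1 (by positivity)
  linarith
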